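/- Partial trace structure of fidelity to a pure product target: given a pure state ρ₀ on H_sys and a state Γ[ρ] on H_ext ⊗ H_sys with Tr(Γ[ρ](𝟙⊗ρ₀)) > 0, setting Λ[ρ] = Tr_ext(Γ[ρ]) and ρ_ext = Tr_sys(Γ[ρ](ρ₀⊗𝟙相应))/Tr(Γ[ρ](𝟙⊗ρ₀)) (the normalized conditional state on the extension), one has F(Λ[ρ], ρ₀) = F(Γ[ρ], ρ_ext ⊗ ρ₀). -/

import Mathlib

open Matrix Kronecker MeasureTheory ComplexOrder

noncomputable section

def msqrt {α : Type*} [Fintype α] [DecidableEq α] (A : Matrix α α ℂ) : Matrix α α ℂ :=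
  open scoped Classical in
  if h : A.PosSemidef then
    (h.1.eigenvectorUnitary : Matrix α α ℂ) * diagonal ((↑) ∘ (Real.sqrt ∘ h.1.eigenvalues)) *
      (star (h.1.eigenvectorUnitary : Matrix α α ℂ)) else 0

def fid {α : Type*} [Fintype α] [DecidableEq α] (ρ σ : Matrix α α ℂ) : ℝ :=
  ((msqrt (msqrt ρ * σ * msqrt ρ)).trace).re ^ 2

def sineDist {α : Type*} [Fintype α] [DecidableEq α] (ρ σ : Matrix α α ℂ) : ℝ :=
  Real.sqrt (1 - fid ρ σ)

def traceDist {α : Type*} [Fintype α] [DecidableEq α] (ρ σ : Matrix α α ℂ) : ℝ :=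
  (1/2) * ((msqrt ((ρ - σ)ᴴ * (ρ - σ))).trace).re

def IsDensity {α : Type*} [Fintype α] (ρ : Matrix α α ℂ) : Prop :=
  ρ.PosSemidef ∧ ρ.trace = 1

def IsPureState {α : Type*} [Fintype α] (ρ : Matrix α α ℂ) : Prop :=
  IsDensity ρ ∧ ∃ ψ : α → ℂ, ρ = Matrix.vecMulVec ψ (star ψ)

def tr' {α : Type*} [Fintype α] (A : Matrix α α ℂ) : ℝ := A.trace.re

def nstate {α : Type*} [Fintype α] (ρ : Matrix α α ℂ) : Matrix α α ℂ :=
  (((tr' ρ : ℝ) : ℂ))⁻¹ • ρ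

def IsCPTD {α β : Type*} [Fintype α] [Fintype β] [DecidableEq α] [DecidableEq β]
    (E : Matrix α α ℂ →ₗ[ℂ] Matrix β β ℂ) : Prop :=
  ∃ (k : ℕ) (K : Fin k → Matrix β α ℂ),
    (∀ ρ, E ρ = ∑ i, K i * ρ * (K i)ᴴ) ∧ (1 - ∑ i, (K i)ᴴ * K i).PosSemidef

def IsCPTP {α β : Type*} [Fintype α] [Fintype β] [DecidableEq α] [DecidableEq β]
    (E : Matrix α α ℂ →ₗ[ℂ] Matrix β β ℂ) : Prop :=
  ∃ (k : ℕ) (K : Fin k → Matrix β α ℂ),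
    (∀ ρ, E ρ = ∑ i, K i * ρ * (K i)ᴴ) ∧ (∑ i, (K i)ᴴ * K i = 1)

def tensId {α β γ : Type*} [Fintype α]
    (E : Matrix α α ℂ → Matrix β β ℂ)
    (ρ : Matrix (α × γ) (α × γ) ℂ) : Matrix (β × γ) (β × γ) ℂ :=
  Matrix.of fun p q => E (Matrix.of fun a b => ρ (a, p.2) (b, q.2)) p.1 q.1

def maxEnt (d : ℕ) : Matrix (Fin d × Fin d) (Fin d × Fin d) ℂ :=
  Matrix.of fun p q => if p.1 = p.2 ∧ q.1 = q.2 then ((d : ℂ))⁻¹ else 0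

def ptraceSnd {α β : Type*} [Fintype β] (ρ : Matrix (α × β) (α × β) ℂ) : Matrix α α ℂ :=
  Matrix.of fun a b => ∑ j, ρ (a, j) (b, j)

def ptraceFst {α β : Type*} [Fintype α] (ρ : Matrix (α × β) (α × β) ℂ) : Matrix β β ℂ :=
  Matrix.of fun i j => ∑ a, ρ (a, i) (a, j)

def choiSine {m n : ℕ} (E₁ E₂ : Matrix (Fin m) (Fin m) ℂ →ₗ[ℂ] Matrix (Fin n) (Fin n) ℂ) : ℝ :=
  sineDist (nstate (tensId (⇑E₁) (maxEnt m))) (nstate (tensId (⇑E₂) (maxEnt m)))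

def diamondSine {m n : ℕ} (E₁ E₂ : Matrix (Fin m) (Fin m) ℂ →ₗ[ℂ] Matrix (Fin n) (Fin n) ℂ) : ℝ :=
  sSup { x | ∃ ρ : Matrix (Fin m × Fin m) (Fin m × Fin m) ℂ, IsPureState ρ ∧
    tr' (tensId (⇑E₁) ρ) ≠ 0 ∧ tr' (tensId (⇑E₂) ρ) ≠ 0 ∧
    x = sineDist (nstate (tensId (⇑E₁) ρ)) (nstate (tensId (⇑E₂) ρ)) }

open scoped MatrixOrder

lemma msqrt_eq_csqrt {α : Type*} [Fintype α] [DecidableEq α] {A : Matrix α α ℂ}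
    (h : A.PosSemidef) : msqrt A = CFC.sqrt A := by
  rw [msqrt, dif_pos h, CFC.sqrt_eq_real_sqrt A h.nonneg, cfcₙ_eq_cfc (hf0 := Real.sqrt_zero), h.1.cfc_eq]
  simp [IsHermitian.cfc, Function.comp_def]

lemma herm_trace_re' {α : Type*} [Fintype α] {A : Matrix α α ℂ} (hA : A.IsHermitian) :
    A.trace = (A.trace.re : ℂ) := by
  have h : (starRingEnd ℂ) A.trace = A.trace := by
    rw [show (starRingEnd ℂ) A.trace = star A.trace from rfl, ← Matrix.trace_conjTranspose, hA.eq]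
  exact (Complex.conj_eq_iff_re.mp h).symm

lemma msqrt_eq_of_sq_eq {α : Type*} [Fintype α] [DecidableEq α] {B X : Matrix α α ℂ}
    (hB : B.PosSemidef) (h : B * B = X) : msqrt X = B := by
  have hX : X.PosSemidef := by
    rw [← h]
    nth_rewrite 1 [← hB.1.eq]
    exact Matrix.posSemidef_conjTranspose_mul_self B
  rw [msqrt_eq_csqrt hX]
  exact CFC.sqrt_unique h hB.nonneg

lemma outer_posSemidef {α : Type*} [Fintype α] (v : α → ℂ) :
    (Matrix.vecMulVec v (star v)).PosSemidef := by
  refine Matrix.PosSemidef.of_dotProduct_mulVec_nonneg ?_ ?_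
  · ext i j
    simp [Matrix.conjTranspose_apply, Matrix.vecMulVec_apply, mul_comm]
  · intro x
    have h1 : dotProduct (star x) ((Matrix.vecMulVec v (star v)) *ᵥ x)
        = star (∑ j, (starRingEnd ℂ) (v j) * x j) * (∑ j, (starRingEnd ℂ) (v j) * x j) := by
      simp only [dotProduct, Matrix.mulVec, Matrix.vecMulVec_apply, Pi.star_apply,
        RCLike.star_def, star_sum, star_mul', starRingEnd_self_apply, dotProduct]
      rw [Finset.sum_mul_sum]
      simp only [Finset.mul_sum]
      apply Finset.sum_congr rfl; intro i _
      apply Finset.sum_congr rfl; intro j _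
      ring
    rw [h1]
    exact star_mul_self_nonneg _

lemma posSemidef_real_smul {α : Type*} [Fintype α] {A : Matrix α α ℂ} (hA : A.PosSemidef)
    {c : ℝ} (hc : 0 ≤ c) : ((c : ℂ) • A).PosSemidef := by
  refine Matrix.PosSemidef.of_dotProduct_mulVec_nonneg ?_ ?_
  · show _ = _
    rw [Matrix.conjTranspose_smul, hA.1.eq, Complex.star_def, Complex.conj_ofReal]
  · intro x
    rw [Matrix.smul_mulVec, dotProduct_smul, smul_eq_mul]
    exact mul_nonneg (by exact_mod_cast hc) (hA.dotProduct_mulVec_nonneg x)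

lemma trace_outer {α : Type*} [Fintype α] (v : α → ℂ) :
    (Matrix.vecMulVec v (star v)).trace = ((∑ i, Complex.normSq (v i) : ℝ) : ℂ) := by
  simp only [Matrix.trace, Matrix.diag, Matrix.vecMulVec_apply, Pi.star_apply]
  push_cast
  apply Finset.sum_congr rfl; intro i _
  rw [show star (v i) = (starRingEnd ℂ) (v i) from rfl, Complex.mul_conj]

lemma outer_mul_outer {α : Type*} [Fintype α] (v : α → ℂ) :
    (Matrix.vecMulVec v (star v)) * (Matrix.vecMulVec v (star v))
      = ((∑ i, Complex.normSq (v i) : ℝ) : ℂ) • (Matrix.vecMulVec v (star v)) := by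
  ext i j
  simp only [Matrix.mul_apply, Matrix.vecMulVec_apply, Pi.star_apply, Matrix.smul_apply,
    smul_eq_mul]
  push_cast
  rw [Finset.sum_mul]
  apply Finset.sum_congr rfl; intro k _
  rw [show star (v k) = (starRingEnd ℂ) (v k) from rfl,
    show (Complex.normSq (v k) : ℂ) = v k * (starRingEnd ℂ) (v k) from (Complex.mul_conj _).symm]
  ring

lemma trace_msqrt_outer {α : Type*} [Fintype α] [DecidableEq α] (v : α → ℂ) :
    (msqrt (Matrix.vecMulVec v (star v))).trace
      = ((Real.sqrt (∑ i, Complex.normSq (v i)) : ℝ) : ℂ) := by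
  set n2 : ℝ := ∑ i, Complex.normSq (v i) with hn2
  have hn2nn : 0 ≤ n2 := Finset.sum_nonneg fun i _ => Complex.normSq_nonneg _
  by_cases h0 : n2 = 0
  · have hv : v = 0 := by
      funext i
      have := (Finset.sum_eq_zero_iff_of_nonneg (fun i _ => Complex.normSq_nonneg (v i))).mp h0 i
        (Finset.mem_univ i)
      exact Complex.normSq_eq_zero.mp this
    have : Matrix.vecMulVec v (star v) = 0 := by
      ext i j; simp [hv, Matrix.vecMulVec_apply]
    rw [this, msqrt_eq_of_sq_eq (Matrix.PosSemidef.zero) (by simp), h0]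
    simp
  · set c : ℝ := (Real.sqrt n2)⁻¹ with hc
    have hsq : Real.sqrt n2 * Real.sqrt n2 = n2 := Real.mul_self_sqrt hn2nn
    have hs0 : Real.sqrt n2 ≠ 0 := by
      intro h; rw [h, mul_zero] at hsq; exact h0 hsq.symm
    have key : ((c : ℂ) • Matrix.vecMulVec v (star v)) * ((c : ℂ) • Matrix.vecMulVec v (star v))
        = Matrix.vecMulVec v (star v) := by
      rw [Matrix.smul_mul, Matrix.mul_smul, outer_mul_outer, smul_smul, smul_smul]
      rw [show ((c:ℂ) * (c:ℂ) * ((∑ i, Complex.normSq (v i) : ℝ):ℂ)) = (((c * c * n2 : ℝ)):ℂ) by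
        rw [hn2]; push_cast; ring]
      have h1 : c * c * n2 = 1 := by
        rw [hc, ← hsq]
        field_simp
        rw [Real.sqrt_sq (Real.sqrt_nonneg _)]
      rw [h1]; simp
    rw [msqrt_eq_of_sq_eq (posSemidef_real_smul (outer_posSemidef v)
      (inv_nonneg.mpr (Real.sqrt_nonneg _))) key]
    rw [Matrix.trace_smul, trace_outer, smul_eq_mul]
    rw [show ((c:ℂ) * (n2:ℂ)) = ((c * n2 : ℝ) : ℂ) by push_cast; ring]
    congr 1
    rw [hc, ← hsq]
    field_simp
    rw [Real.sqrt_sq (Real.sqrt_nonneg _)]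

lemma fid_pure_right {α : Type*} [Fintype α] [DecidableEq α] {ρ : Matrix α α ℂ}
    (hρ : ρ.PosSemidef) (ψ : α → ℂ) :
    fid ρ (Matrix.vecMulVec ψ (star ψ)) = ((ρ * Matrix.vecMulVec ψ (star ψ)).trace).re := by
  have hS : msqrt ρ = CFC.sqrt ρ := msqrt_eq_csqrt hρ
  set S := msqrt ρ with hSdef
  have hSH : S.IsHermitian := hS ▸ (CFC.sqrt_nonneg ρ).posSemidef.1
  have hSS : S * S = ρ := by rw [hS]; exact CFC.sqrt_mul_sqrt_self ρ hρ.nonneg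
  set v := S *ᵥ ψ with hv
  have hstar : ∀ j, star ((S *ᵥ ψ) j) = ∑ l, star (ψ l) * S l j := by
    intro j
    simp only [Matrix.mulVec, dotProduct]
    rw [star_sum]
    apply Finset.sum_congr rfl; intro l _
    rw [StarMul.star_mul]
    congr 1
    have := congrFun (congrFun hSH.eq l) j
    simpa [Matrix.conjTranspose_apply] using this
  have key : S * Matrix.vecMulVec ψ (star ψ) * S = Matrix.vecMulVec v (star v) := by
    ext i j
    simp only [Matrix.mul_apply, Matrix.vecMulVec_apply, Pi.star_apply, hv]
    rw [hstar j]
    show ∑ l, (∑ k, S i k * (ψ k * star (ψ l))) * S l j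
        = (S *ᵥ ψ) i * ∑ l, star (ψ l) * S l j
    simp only [Matrix.mulVec, dotProduct]
    rw [Finset.sum_mul_sum, Finset.sum_comm]
    apply Finset.sum_congr rfl; intro l _
    rw [Finset.sum_mul]
    apply Finset.sum_congr rfl; intro k _
    ring
  have htr : (ρ * Matrix.vecMulVec ψ (star ψ)).trace = ((∑ i, Complex.normSq (v i) : ℝ) : ℂ) := by
    rw [← hSS, Matrix.trace_mul_cycle, Matrix.trace_mul_cycle, key, trace_outer]
  rw [fid, key, trace_msqrt_outer, htr]
  simp only [Complex.ofReal_re]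
  rw [Real.sq_sqrt (Finset.sum_nonneg fun i _ => Complex.normSq_nonneg _)]


/-- Fidelity to a pure product target via partial traces
(Proposition 2 of Sekatski et al.). -/
theorem fidelity_partial_trace_pure_target {ext s : ℕ}
    (ψ₀ : Fin s → ℂ) (hψ : ∑ i, Complex.normSq (ψ₀ i) = 1)
    (ρ₀ : Matrix (Fin s) (Fin s) ℂ) (hρ₀ : ρ₀ = Matrix.vecMulVec ψ₀ (star ψ₀))
    (Γρ : Matrix (Fin ext × Fin s) (Fin ext × Fin s) ℂ) (hΓ : IsDensity Γρ)
    (hpos : 0 < tr' (Γρ * ((1 : Matrix (Fin ext) (Fin ext) ℂ) ⊗ₖ ρ₀)))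
    (ρext : Matrix (Fin ext) (Fin ext) ℂ)
    (hρext : ρext = ((tr' (Γρ * ((1 : Matrix (Fin ext) (Fin ext) ℂ) ⊗ₖ ρ₀)) : ℂ))⁻¹ •
      ptraceSnd (Γρ * ((1 : Matrix (Fin ext) (Fin ext) ℂ) ⊗ₖ ρ₀))) :
    fid (ptraceFst Γρ) ρ₀ = fid Γρ (ρext ⊗ₖ ρ₀) := by
  set P : Matrix (Fin ext × Fin s) (Fin ext × Fin s) ℂ :=
    (1 : Matrix (Fin ext) (Fin ext) ℂ) ⊗ₖ ρ₀ with hP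
  set p : ℝ := tr' (Γρ * P) with hpdef
  -- basic facts about ρ₀ and P
  have hρ₀sq : ρ₀ * ρ₀ = ρ₀ := by
    rw [hρ₀]
    ext i j
    simp only [Matrix.mul_apply, Matrix.vecMulVec_apply, Pi.star_apply]
    rw [show (∑ k, ψ₀ i * star (ψ₀ k) * (ψ₀ k * star (ψ₀ j)))
        = (∑ k, (Complex.normSq (ψ₀ k) : ℂ)) * (ψ₀ i * star (ψ₀ j)) by
      rw [Finset.sum_mul]
      apply Finset.sum_congr rfl; intro k _
      rw [show star (ψ₀ k) = (starRingEnd ℂ) (ψ₀ k) from rfl,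
        show (Complex.normSq (ψ₀ k) : ℂ) = ψ₀ k * (starRingEnd ℂ) (ψ₀ k) from
          (Complex.mul_conj _).symm]
      ring]
    rw [show (∑ k, (Complex.normSq (ψ₀ k) : ℂ)) = ((∑ k, Complex.normSq (ψ₀ k) : ℝ) : ℂ) by
      push_cast; rfl]
    rw [hψ]
    simp
  have hρ₀psd : ρ₀.PosSemidef := hρ₀ ▸ outer_posSemidef ψ₀
  have hPH : P.IsHermitian := by
    show _ = _
    ext ⟨a, i⟩ ⟨b, j⟩
    simp only [Matrix.conjTranspose_apply, hP, Matrix.kroneckerMap_apply, Matrix.one_apply,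
      star_mul']
    have h1 := congrFun (congrFun hρ₀psd.1.eq i) j
    simp only [Matrix.conjTranspose_apply] at h1
    rw [← h1]
    by_cases h : b = a <;> by_cases h' : a = b <;> simp_all
  have hPP : P * P = P := by
    rw [hP, ← Matrix.mul_kronecker_mul, Matrix.one_mul, hρ₀sq]
  have hPpsd : P.PosSemidef := by
    have : Pᴴ * P = P := by rw [hPH.eq, hPP]
    exact this ▸ Matrix.posSemidef_conjTranspose_mul_self P
  -- Λ := ptraceFst Γρ is PSD
  have hΛpsd : (ptraceFst Γρ).PosSemidef := by
    refine Matrix.PosSemidef.of_dotProduct_mulVec_nonneg ?_ ?_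
    · show _ = _
      ext i j
      simp only [Matrix.conjTranspose_apply, ptraceFst, Matrix.of_apply, star_sum]
      apply Finset.sum_congr rfl; intro a _
      have h1 := congrFun (congrFun hΓ.1.1.eq (a, i)) (a, j)
      simp only [Matrix.conjTranspose_apply] at h1
      exact h1
    · intro x
      have key : dotProduct (star x) ((ptraceFst Γρ) *ᵥ x)
          = ∑ a : Fin ext, dotProduct
              (star (fun bi : Fin ext × Fin s => if bi.1 = a then x bi.2 else 0))
              (Γρ *ᵥ (fun bi : Fin ext × Fin s => if bi.1 = a then x bi.2 else 0)) := by
        simp only [dotProduct, Matrix.mulVec, ptraceFst, Matrix.of_apply, Pi.star_apply,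
          Fintype.sum_prod_type, dotProduct, apply_ite (star : ℂ → ℂ), star_zero, ite_mul,
          zero_mul, mul_ite, mul_zero]
        have step1 : ∀ a : Fin ext,
            (∑ b : Fin ext, ∑ i : Fin s, if b = a then
              star (x i) * ∑ c : Fin ext, ∑ j : Fin s,
                (if c = a then Γρ (b, i) (c, j) * x j else 0) else 0)
            = ∑ i, star (x i) * ∑ j, Γρ (a, i) (a, j) * x j := by
          intro a
          rw [Finset.sum_comm]
          simp only [Finset.sum_ite_eq', Finset.mem_univ, if_true]
          apply Finset.sum_congr rfl; intro i _
          congr 1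
          rw [Finset.sum_comm]
          simp only [Finset.sum_ite_eq', Finset.mem_univ, if_true]
        have step2 : ∀ i, star (x i) * (∑ j, (∑ a, Γρ (a, i) (a, j)) * x j)
            = ∑ a : Fin ext, star (x i) * ∑ j, Γρ (a, i) (a, j) * x j := by
          intro i
          simp only [Finset.sum_mul, Finset.mul_sum, mul_assoc]
          exact Finset.sum_comm
        simp only [step2]
        rw [Finset.sum_comm]
        exact Finset.sum_congr rfl fun a _ => (step1 a).symm
      rw [key]
      exact Finset.sum_nonneg fun a _ => hΓ.1.dotProduct_mulVec_nonneg _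
  -- trace identity: (Λ ρ₀).trace = (Γρ P).trace
  have htr : ((ptraceFst Γρ) * ρ₀).trace = (Γρ * P).trace := by
    simp only [Matrix.trace, Matrix.diag, Matrix.mul_apply, ptraceFst, Matrix.of_apply, hP,
      Matrix.kroneckerMap_apply, Matrix.one_apply, Fintype.sum_prod_type, mul_ite, mul_zero,
      ite_mul, zero_mul, mul_one, Finset.sum_ite_eq', Finset.mem_univ, if_true]
    have hR : ∀ (a : Fin ext) (i : Fin s),
        (∑ b : Fin ext, ∑ j : Fin s, if b = a then Γρ (a, i) (b, j) * (1 * ρ₀ j i) else 0)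
        = ∑ j, Γρ (a, i) (a, j) * ρ₀ j i := by
      intro a i
      rw [Finset.sum_comm]
      simp only [Finset.sum_ite_eq', Finset.mem_univ, if_true, one_mul]
    simp only [hR, Finset.sum_mul]
    trans (∑ x : Fin s, ∑ i : Fin ext, ∑ y : Fin s, Γρ (i, x) (i, y) * ρ₀ y x)
    · exact Finset.sum_congr rfl fun x _ => Finset.sum_comm
    exact Finset.sum_comm
  -- Kronecker identity
  have hXP : (ptraceSnd (Γρ * P)) ⊗ₖ ρ₀ = P * Γρ * P := by
    ext ⟨a, i⟩ ⟨b, j⟩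
    simp only [Matrix.kroneckerMap_apply, ptraceSnd, Matrix.of_apply, Matrix.mul_apply,
      hP, Matrix.one_apply, Fintype.sum_prod_type, ite_mul, zero_mul, mul_ite, mul_zero]
    have L1 : ∀ x : Fin s,
        (∑ c : Fin ext, ∑ k : Fin s, if c = b then Γρ (a, x) (c, k) * (1 * ρ₀ k x) else 0)
        = ∑ k, Γρ (a, x) (b, k) * ρ₀ k x := by
      intro x
      rw [Finset.sum_comm]
      simp only [Finset.sum_ite_eq', Finset.mem_univ, if_true, one_mul]
    have R0 : (∑ c : Fin ext, ∑ l : Fin s, if c = b then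
          (∑ d : Fin ext, ∑ k : Fin s, if a = d then 1 * ρ₀ i k * Γρ (d, k) (c, l) else 0)
            * (1 * ρ₀ l j) else 0)
        = ∑ l : Fin s, (∑ k, ρ₀ i k * Γρ (a, k) (b, l)) * ρ₀ l j := by
      rw [Finset.sum_comm]
      simp only [Finset.sum_ite_eq', Finset.mem_univ, if_true, one_mul]
      apply Finset.sum_congr rfl; intro l _
      congr 1
      rw [Finset.sum_comm]
      simp only [Finset.sum_ite_eq, Finset.mem_univ, if_true, one_mul]
    rw [R0]
    simp only [L1, Finset.sum_mul]
    trans (∑ k : Fin s, ∑ x : Fin s, Γρ (a, x) (b, k) * ρ₀ k x * ρ₀ i j)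
    · exact Finset.sum_comm
    apply Finset.sum_congr rfl; intro l _
    apply Finset.sum_congr rfl; intro k _
    rw [hρ₀]
    simp only [Matrix.vecMulVec_apply, Pi.star_apply]
    ring
  -- the fidelity computation
  have hΓpsd := hΓ.1
  have hS : msqrt Γρ = CFC.sqrt Γρ := msqrt_eq_csqrt hΓpsd
  set S := msqrt Γρ with hSdef
  have hSH : S.IsHermitian := hS ▸ (CFC.sqrt_nonneg Γρ).posSemidef.1
  have hSS : S * S = Γρ := by rw [hS]; exact CFC.sqrt_mul_sqrt_self Γρ hΓpsd.nonneg
  set A := S * P * S with hA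
  have hApsd : A.PosSemidef := by
    have := hPpsd.conjTranspose_mul_mul_same S
    rwa [hSH.eq] at this
  have hAtr1 : A.trace = (Γρ * P).trace := by
    rw [hA, Matrix.trace_mul_cycle, hSS]
  have hAtr : A.trace = ((p : ℝ) : ℂ) := by
    rw [herm_trace_re' hApsd.1, hAtr1, hpdef]
    rfl
  have hσ : ρext ⊗ₖ ρ₀ = (((p : ℝ) : ℂ))⁻¹ • (P * Γρ * P) := by
    rw [hρext, Matrix.smul_kronecker, hXP]
  have hsp : Real.sqrt p * Real.sqrt p = p := Real.mul_self_sqrt hpos.le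
  have hsp0 : Real.sqrt p ≠ 0 := (Real.sqrt_pos.mpr hpos).ne'
  set B := ((((Real.sqrt p)⁻¹ : ℝ)) : ℂ) • A with hB
  have hBpsd : B.PosSemidef := posSemidef_real_smul hApsd (inv_nonneg.mpr (Real.sqrt_nonneg _))
  have hBB : B * B = S * (ρext ⊗ₖ ρ₀) * S := by
    rw [hσ, hB, Matrix.smul_mul, Matrix.mul_smul, smul_smul, Matrix.mul_smul, Matrix.smul_mul]
    congr 1
    · rw [show ((((Real.sqrt p)⁻¹ : ℝ)) : ℂ) * ((((Real.sqrt p)⁻¹ : ℝ)) : ℂ)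
          = ((((Real.sqrt p)⁻¹ * (Real.sqrt p)⁻¹ : ℝ)) : ℂ) by push_cast; ring]
      rw [show (Real.sqrt p)⁻¹ * (Real.sqrt p)⁻¹ = p⁻¹ by rw [← mul_inv, hsp]]
      rw [Complex.ofReal_inv]
    · rw [hA, ← hSS]
      simp only [Matrix.mul_assoc]
  have hmsq : msqrt (S * (ρext ⊗ₖ ρ₀) * S) = B := msqrt_eq_of_sq_eq hBpsd hBB
  have lhs_eq : fid (ptraceFst Γρ) ρ₀ = p := by
    rw [hρ₀, fid_pure_right hΛpsd, ← hρ₀, htr, hpdef]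
    rfl
  have rhs_eq : fid Γρ (ρext ⊗ₖ ρ₀) = p := by
    show ((msqrt (S * (ρext ⊗ₖ ρ₀) * S)).trace).re ^ 2 = p
    rw [hmsq, hB, Matrix.trace_smul, hAtr, smul_eq_mul]
    rw [show ((((Real.sqrt p)⁻¹ : ℝ)) : ℂ) * ((p:ℝ):ℂ) = (((Real.sqrt p)⁻¹ * p : ℝ) : ℂ) by
      push_cast; ring]
    rw [Complex.ofReal_re]
    rw [show (Real.sqrt p)⁻¹ * p = Real.sqrt p by rw [← hsp]; field_simp; rw [Real.sqrt_sq (Real.sqrt_nonneg _)]]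
    exact Real.sq_sqrt hpos.le
  rw [lhs_eq, rhs_eq]
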